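/- arXiv:1901.07648 — 2 statements merged into one kernel-verified Lean document; each statement's English description precedes it below -/
import Mathlib

section
/- Suppose each f_i is L-smooth and convex, and let w* be a minimizer of F = (1/n) Σ_{i=1}^n f_i. Consider a single outer-loop iteration of SARAH with learning rate 0 < η ≤ 1/L. Then for every t ≥ 0 and any outer iteration s ≥ 1, E[F(w_{t+1}^{(s)}) − F(w*)] ≤ E[F(w_t^{(s)}) − F(w*)] − (η/2) E[‖∇F(w_t^{(s)})‖²] + (η/2) (Lη · E[‖v_0^{(s)}‖²] − E[‖v_t^{(s)}‖²]). -/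
noncomputable section

abbrev Vec (d : ℕ) : Type := EuclideanSpace ℝ (Fin d)

/-- One inner loop of SARAH: `(innerSeq d n f F η x0 ι t) = (w_t, v_t)`, where the step from
`t` to `t+1` uses the sampled index `ι t` (so `ι t` plays the role of `i_{t+1}`). -/
noncomputable def innerSeq (d n : ℕ) (f : Fin n → Vec d → ℝ) (F : Vec d → ℝ) (η : ℝ)
    (x0 : Vec d) (ι : ℕ → Fin n) : ℕ → Vec d × Vec d
  | 0 => (x0, gradient F x0)
  | t + 1 =>
    let p := innerSeq d n f F η x0 ι t
    let w := p.1 - η • p.2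
    (w, gradient (f (ι t)) w - gradient (f (ι t)) p.1 + p.2)

/-- Expectation over the first `k` uniformly random indices of a single SARAH inner loop:
the average of `X` over all `ι : Fin k → Fin n`, padded by a dummy index beyond `k`.
(All quantities appearing below depend only on the first `k` indices.) -/
noncomputable def loopE (n k : ℕ) (hn : 0 < n) (X : (ℕ → Fin n) → ℝ) : ℝ :=
  (∑ ι : Fin k → Fin n, X fun t => if h : t < k then ι ⟨t, h⟩ else ⟨0, hn⟩) /
    (Fintype.card (Fin k → Fin n) : ℝ)

open scoped RealInnerProductSpace

variable {d : ℕ}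

lemma inner_gradient (φ : Vec d → ℝ) (x v : Vec d) :
    ⟪gradient φ x, v⟫ = fderiv ℝ φ x v := by
  simp [gradient]

lemma hasDerivAt_line (φ : Vec d → ℝ) (hφ : Differentiable ℝ φ) (x v : Vec d) (t : ℝ) :
    HasDerivAt (fun s : ℝ => φ (x + s • v)) ⟪gradient φ (x + t • v), v⟫ t := by
  have hc : HasDerivAt (fun s : ℝ => x + s • v) v t := by
    simpa using ((hasDerivAt_id t).smul_const v).const_add x
  have := (hφ (x + t • v)).hasFDerivAt.comp_hasDerivAt t hc
  rw [inner_gradient]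
  exact this

/-- Descent lemma: `L`-Lipschitz gradient gives a quadratic upper bound. -/
lemma descent_lemma (φ : Vec d → ℝ) (hφ : Differentiable ℝ φ) (L : ℝ) (hL : 0 ≤ L)
    (hLip : ∀ w w' : Vec d, ‖gradient φ w - gradient φ w'‖ ≤ L * ‖w - w'‖)
    (x y : Vec d) :
    φ y ≤ φ x + ⟪gradient φ x, y - x⟫ + L / 2 * ‖y - x‖ ^ 2 := by
  set v := y - x with hv
  have hgrad_cont : Continuous (gradient φ) := by
    have : LipschitzWith (Real.toNNReal L) (gradient φ) := by
      apply LipschitzWith.of_dist_le_mul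
      intro w w'
      simpa [dist_eq_norm, Real.coe_toNNReal L hL] using hLip w w'
    exact this.continuous
  have hline : ∀ t : ℝ, HasDerivAt (fun s : ℝ => φ (x + s • v))
      ⟪gradient φ (x + t • v), v⟫ t := fun t => hasDerivAt_line φ hφ x v t
  have hcont : Continuous fun t : ℝ => ⟪gradient φ (x + t • v), v⟫ := by
    apply Continuous.inner
    · exact hgrad_cont.comp (by continuity)
    · exact continuous_const
  have hFTC : ∫ t in (0:ℝ)..1, ⟪gradient φ (x + t • v), v⟫
      = φ (x + (1:ℝ) • v) - φ (x + (0:ℝ) • v) := by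
    exact intervalIntegral.integral_eq_sub_of_hasDerivAt (fun t _ => hline t)
      (hcont.intervalIntegrable 0 1)
  have h1 : x + (1:ℝ) • v = y := by simp [hv]
  have h0 : x + (0:ℝ) • v = x := by simp
  rw [h1, h0] at hFTC
  have hmono : ∫ t in (0:ℝ)..1, ⟪gradient φ (x + t • v), v⟫
      ≤ ∫ t in (0:ℝ)..1, (⟪gradient φ x, v⟫ + L * t * ‖v‖ ^ 2) := by
    apply intervalIntegral.integral_mono_on (by norm_num)
    · exact hcont.intervalIntegrable 0 1
    · exact (continuous_const.add ((continuous_const.mul continuous_id).mul continuous_const)).intervalIntegrable 0 1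
    · intro t ht
      have hd : ⟪gradient φ (x + t • v), v⟫ - ⟪gradient φ x, v⟫
          = ⟪gradient φ (x + t • v) - gradient φ x, v⟫ := by
        rw [inner_sub_left]
      have hb : ⟪gradient φ (x + t • v) - gradient φ x, v⟫
          ≤ ‖gradient φ (x + t • v) - gradient φ x‖ * ‖v‖ := real_inner_le_norm _ _
      have hn : ‖gradient φ (x + t • v) - gradient φ x‖ ≤ L * (t * ‖v‖) := by
        have := hLip (x + t • v) x
        simpa [norm_smul, abs_of_nonneg ht.1] using this
      have hvn : (0:ℝ) ≤ ‖v‖ := norm_nonneg v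
      nlinarith [mul_le_mul_of_nonneg_right hn hvn]
  have hint : ∫ t in (0:ℝ)..1, (⟪gradient φ x, v⟫ + L * t * ‖v‖ ^ 2)
      = ⟪gradient φ x, v⟫ + L / 2 * ‖v‖ ^ 2 := by
    have hc2 : Continuous fun t : ℝ => L * t * ‖v‖ ^ 2 :=
      (continuous_const.mul continuous_id).mul continuous_const
    rw [intervalIntegral.integral_add intervalIntegrable_const (hc2.intervalIntegrable 0 1)]
    have he : (fun t : ℝ => L * t * ‖v‖^2) = fun t : ℝ => (L * ‖v‖^2) * t := by funext t; ring
    rw [he, intervalIntegral.integral_const_mul, integral_id]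
    simp
    ring
  rw [hint] at hmono
  linarith

/-- First-order condition for convex differentiable functions. -/
lemma convex_lower (φ : Vec d → ℝ) (hφ : Differentiable ℝ φ)
    (hconv : ConvexOn ℝ Set.univ φ) (x y : Vec d) :
    φ x + ⟪gradient φ x, y - x⟫ ≤ φ y := by
  set v := y - x with hv
  -- 1-D restriction
  have hmap : ∀ s : ℝ, (AffineMap.lineMap x y : ℝ →ᵃ[ℝ] Vec d) s = x + s • v := by
    intro s; simp [AffineMap.lineMap_apply, hv]; module
  have hg : ConvexOn ℝ Set.univ (fun s : ℝ => φ (x + s • v)) := by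
    have := hconv.comp_affineMap (AffineMap.lineMap x y : ℝ →ᵃ[ℝ] Vec d)
    simp only [Set.preimage_univ] at this
    have hfun : (fun s : ℝ => φ (x + s • v)) = φ ∘ ⇑(AffineMap.lineMap x y : ℝ →ᵃ[ℝ] Vec d) := by
      funext s
      simp [Function.comp, hmap s]
    rw [hfun]; exact this
  have hder : HasDerivAt (fun s : ℝ => φ (x + s • v)) ⟪gradient φ x, v⟫ 0 := by
    simpa using hasDerivAt_line φ hφ x v 0
  have := hg.le_slope_of_hasDerivAt (Set.mem_univ (0:ℝ)) (Set.mem_univ (1:ℝ)) one_pos hder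
  rw [slope_def_field] at this
  simp only [zero_smul, add_zero, one_smul] at this
  have h1 : x + v = y := by simp [hv]
  rw [h1] at this
  have : ⟪gradient φ x, v⟫ ≤ φ y - φ x := by
    simpa [div_one] using this
  linarith

/-- Co-coercivity of the gradient of a convex `L`-smooth function. -/
lemma cocoercive (φ : Vec d → ℝ) (hφ : Differentiable ℝ φ) (L : ℝ) (hL : 0 < L)
    (hLip : ∀ w w' : Vec d, ‖gradient φ w - gradient φ w'‖ ≤ L * ‖w - w'‖)
    (hconv : ConvexOn ℝ Set.univ φ) (x y : Vec d) :
    (1 / L) * ‖gradient φ x - gradient φ y‖ ^ 2 ≤ ⟪gradient φ x - gradient φ y, x - y⟫ := by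
  -- auxiliary: half-inequality
  have half : ∀ x y : Vec d,
      φ x + ⟪gradient φ x, y - x⟫ + 1 / (2 * L) * ‖gradient φ y - gradient φ x‖ ^ 2 ≤ φ y := by
    intro x y
    set c := gradient φ x with hc
    set h : Vec d → ℝ := fun w => φ w - ⟪c, w⟫ with hh
    have hgradh : ∀ w, HasGradientAt h (gradient φ w - c) w := by
      intro w
      rw [hasGradientAt_iff_hasFDerivAt, map_sub]
      exact ((hφ w).hasFDerivAt.sub (InnerProductSpace.toDual ℝ (Vec d) c).hasFDerivAt).congr_fderiv
        (by rw [gradient, LinearIsometryEquiv.apply_symm_apply])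
    have hdiffh : Differentiable ℝ h := fun w => ((hgradh w).differentiableAt : DifferentiableAt ℝ h w)
    have hgradh' : ∀ w, gradient h w = gradient φ w - c := fun w => (hgradh w).gradient
    have hlin : ConvexOn ℝ (Set.univ : Set (Vec d)) (fun w => -⟪c, w⟫) :=
      ⟨convex_univ, fun w _ w' _ a b _ _ _ =>
        le_of_eq (by simp only [inner_add_right, inner_smul_right, smul_eq_mul]; ring)⟩
    have hconvh : ConvexOn ℝ Set.univ h := by
      have h2 := hconv.add hlin
      have h3 : h = φ + fun w => -⟪c, w⟫ := by
        funext w; simp [hh, sub_eq_add_neg]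
      rw [h3]; exact h2
    have hLiph : ∀ w w' : Vec d, ‖gradient h w - gradient h w'‖ ≤ L * ‖w - w'‖ := by
      intro w w'
      rw [hgradh', hgradh']
      simpa [sub_sub_sub_cancel_right] using hLip w w'
    set g := gradient h y with hgdef
    set z := y - (1 / L) • g with hz
    have hxz : h x ≤ h z := by
      have := convex_lower h hdiffh hconvh x z
      rw [hgradh' x, ← hc, sub_self] at this
      simpa using this
    have hzy : z - y = -((1 / L) • g) := by rw [hz]; abel
    have hdes : h z ≤ h y + ⟪g, z - y⟫ + L / 2 * ‖z - y‖ ^ 2 :=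
      descent_lemma h hdiffh L hL.le hLiph y z
    have hi : ⟪g, z - y⟫ = -(1 / L * ‖g‖ ^ 2) := by
      rw [hzy, inner_neg_right, real_inner_smul_right, real_inner_self_eq_norm_sq]
    have hn : ‖z - y‖ ^ 2 = (1 / L) ^ 2 * ‖g‖ ^ 2 := by
      rw [hzy, norm_neg, norm_smul]
      rw [Real.norm_eq_abs, abs_of_pos (by positivity : (0:ℝ) < 1 / L)]
      ring
    have hL0 : L ≠ 0 := ne_of_gt hL
    have key : h x ≤ h y - 1 / (2 * L) * ‖g‖ ^ 2 := by
      rw [hi, hn] at hdes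
      have hcomb : h y + -(1 / L * ‖g‖ ^ 2) + L / 2 * ((1 / L) ^ 2 * ‖g‖ ^ 2)
          = h y - 1 / (2 * L) * ‖g‖ ^ 2 := by
        field_simp
        ring
      exact hxz.trans (hdes.trans_eq hcomb)
    have hgeq : ‖g‖ = ‖gradient φ y - c‖ := by rw [hgdef, hgradh' y]
    rw [hgeq] at key
    simp only [hh] at key
    rw [inner_sub_right]
    linarith
  have h1 := half x y
  have h2 := half y x
  have e1 : ⟪gradient φ x, y - x⟫ = -⟪gradient φ x, x - y⟫ := by
    rw [show y - x = -(x - y) by abel, inner_neg_right]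
  have e2 : ‖gradient φ y - gradient φ x‖ = ‖gradient φ x - gradient φ y‖ := norm_sub_rev _ _
  rw [e1, e2] at h1
  rw [inner_sub_left]
  have hL0 : (0:ℝ) < 1 / (2 * L) := by positivity
  have : 1 / L = 1 / (2 * L) + 1 / (2 * L) := by field_simp; ring
  rw [this]
  linarith

/-! ### loopE machinery -/

def pad {n : ℕ} (hn : 0 < n) (k : ℕ) (ι : Fin k → Fin n) : ℕ → Fin n :=
  fun t => if h : t < k then ι ⟨t, h⟩ else ⟨0, hn⟩

noncomputable def loopE' (n k : ℕ) (hn : 0 < n) (X : (ℕ → Fin n) → ℝ) : ℝ :=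
  (∑ ι : Fin k → Fin n, X (pad hn k ι)) / (Fintype.card (Fin k → Fin n) : ℝ)

variable {n : ℕ}

lemma card_fun_pos (hn : 0 < n) (k : ℕ) : (0:ℝ) < (Fintype.card (Fin k → Fin n) : ℝ) := by
  have : 0 < Fintype.card (Fin k → Fin n) := by
    simp only [Fintype.card_fun, Fintype.card_fin]
    exact pow_pos hn k
  exact_mod_cast this

lemma loopE'_add (hn : 0 < n) (k : ℕ) (X Y : (ℕ → Fin n) → ℝ) :
    loopE' n k hn (fun g => X g + Y g) = loopE' n k hn X + loopE' n k hn Y := by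
  unfold loopE'
  rw [← add_div, ← Finset.sum_add_distrib]

lemma loopE'_mul (hn : 0 < n) (c : ℝ) (k : ℕ) (X : (ℕ → Fin n) → ℝ) :
    loopE' n k hn (fun g => c * X g) = c * loopE' n k hn X := by
  unfold loopE'
  rw [← Finset.mul_sum, mul_div_assoc]

lemma loopE'_const (hn : 0 < n) (k : ℕ) (c : ℝ) : loopE' n k hn (fun _ => c) = c := by
  unfold loopE'
  rw [Finset.sum_const]
  simp only [Finset.card_univ, nsmul_eq_mul]
  field_simp [(card_fun_pos hn k).ne']

lemma loopE'_mono (hn : 0 < n) (k : ℕ) {X Y : (ℕ → Fin n) → ℝ} (h : ∀ g, X g ≤ Y g) :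
    loopE' n k hn X ≤ loopE' n k hn Y := by
  unfold loopE'
  exact (div_le_div_iff_of_pos_right (card_fun_pos hn k)).mpr (Finset.sum_le_sum fun ι _ => h _)

lemma pad_snoc (hn : 0 < n) (k : ℕ) (σ : Fin k → Fin n) (a : Fin n) :
    pad hn (k+1) (Fin.snoc σ a) = Function.update (pad hn k σ) k a := by
  funext t
  rcases lt_trichotomy t k with h | h | h
  · rw [Function.update_of_ne (by omega)]
    unfold pad
    rw [dif_pos (by omega : t < k + 1), dif_pos h]
    have he : (⟨t, by omega⟩ : Fin (k+1)) = Fin.castSucc ⟨t, h⟩ := rfl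
    rw [he, Fin.snoc_castSucc]
  · subst h
    rw [Function.update_self]
    unfold pad
    rw [dif_pos (by omega : t < t + 1)]
    have he : (⟨t, by omega⟩ : Fin (t+1)) = Fin.last t := rfl
    rw [he, Fin.snoc_last]
  · rw [Function.update_of_ne (by omega)]
    unfold pad
    rw [dif_neg (by omega), dif_neg (by omega)]

lemma loopE'_succ (hn : 0 < n) (k : ℕ) (X : (ℕ → Fin n) → ℝ) :
    loopE' n (k+1) hn X
      = loopE' n k hn (fun g => (∑ j : Fin n, X (Function.update g k j)) / n) := by
  unfold loopE'
  rw [← Fintype.sum_equiv (Fin.snocEquiv (fun _ => Fin n))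
        (fun p => X (pad hn (k+1) (Fin.snoc p.2 p.1)))
        (fun ι => X (pad hn (k+1) ι)) (fun p => rfl)]
  rw [Fintype.sum_prod_type]
  rw [Finset.sum_comm]
  have hrw : ∀ σ : Fin k → Fin n, ∑ a : Fin n, X (pad hn (k+1) (Fin.snoc σ a))
      = ∑ a : Fin n, X (Function.update (pad hn k σ) k a) :=
    fun σ => Finset.sum_congr rfl fun a _ => by rw [pad_snoc]
  rw [Finset.sum_congr rfl fun σ _ => hrw σ, Finset.sum_div, Finset.sum_div]
  apply Finset.sum_congr rfl
  intro σ _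
  rw [div_div]
  congr 1
  simp only [Fintype.card_fun, Fintype.card_fin]
  push_cast
  ring

lemma loopE'_sub (hn : 0 < n) (k : ℕ) (X Y : (ℕ → Fin n) → ℝ) :
    loopE' n k hn (fun g => X g - Y g) = loopE' n k hn X - loopE' n k hn Y := by
  unfold loopE'
  rw [← sub_div, ← Finset.sum_sub_distrib]

lemma loopE'_succ_dep (hn : 0 < n) (k : ℕ) (X : (ℕ → Fin n) → ℝ)
    (h : ∀ g j, X (Function.update g k j) = X g) :
    loopE' n (k+1) hn X = loopE' n k hn X := by
  rw [loopE'_succ]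
  congr 1
  funext g
  rw [Finset.sum_congr rfl fun j _ => h g j, Finset.sum_const]
  simp only [Finset.card_univ, Fintype.card_fin, nsmul_eq_mul]
  field_simp

open scoped RealInnerProductSpace in
lemma avg_var_le {d : ℕ} (hn : 0 < n) (a Δbar : Vec d) (Δ : Fin n → Vec d)
    (hsum : ∑ j, Δ j = (n:ℝ) • Δbar) :
    (∑ j, ‖a + (Δ j - Δbar)‖ ^ 2) / n ≤ ‖a‖ ^ 2 + (∑ j, ‖Δ j‖ ^ 2) / n := by
  have hnR : (0:ℝ) < n := by exact_mod_cast hn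
  have h1 : ∀ j : Fin n, ‖a + (Δ j - Δbar)‖ ^ 2
      = ‖a‖ ^ 2 + 2 * ⟪a, Δ j - Δbar⟫ + ‖Δ j - Δbar‖ ^ 2 := fun j =>
    norm_add_sq_real a (Δ j - Δbar)
  have h2 : ∀ j : Fin n, ‖Δ j - Δbar‖ ^ 2
      = ‖Δ j‖ ^ 2 - 2 * ⟪Δ j, Δbar⟫ + ‖Δbar‖ ^ 2 := fun j =>
    norm_sub_sq_real (Δ j) Δbar
  have hs1 : ∑ j, ⟪a, Δ j - Δbar⟫ = 0 := by
    rw [← inner_sum]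
    have : ∑ j : Fin n, (Δ j - Δbar) = 0 := by
      rw [Finset.sum_sub_distrib, hsum, Finset.sum_const]
      simp only [Finset.card_univ, Fintype.card_fin]
      rw [← Nat.cast_smul_eq_nsmul ℝ, sub_self]
    rw [this, inner_zero_right]
  have hs2 : ∑ j, ⟪Δ j, Δbar⟫ = (n:ℝ) * ‖Δbar‖ ^ 2 := by
    rw [← sum_inner, hsum, real_inner_smul_left, real_inner_self_eq_norm_sq]
  have hE : ∑ j, ‖a + (Δ j - Δbar)‖ ^ 2
      = (n:ℝ) * ‖a‖ ^ 2 + (∑ j, ‖Δ j‖ ^ 2) - (n:ℝ) * ‖Δbar‖ ^ 2 := by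
    rw [Finset.sum_congr rfl fun j _ => h1 j]
    rw [Finset.sum_add_distrib, Finset.sum_add_distrib, ← Finset.mul_sum, hs1]
    rw [Finset.sum_congr rfl fun j _ => h2 j]
    rw [Finset.sum_add_distrib, Finset.sum_sub_distrib, ← Finset.mul_sum, hs2]
    simp [Finset.sum_const]
    ring
  rw [hE, div_le_iff₀ hnR]
  have hb : (0:ℝ) ≤ (n:ℝ) * ‖Δbar‖ ^ 2 := by positivity
  have hexp : (‖a‖ ^ 2 + (∑ j, ‖Δ j‖ ^ 2) / n) * n = (n:ℝ) * ‖a‖ ^ 2 + ∑ j, ‖Δ j‖ ^ 2 := by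
    field_simp
  rw [hexp]
  linarith


lemma loopE_eq_loopE' {n : ℕ} (k : ℕ) (hn : 0 < n) (X : (ℕ → Fin n) → ℝ) :
    loopE n k hn X = loopE' n k hn X := rfl

set_option maxHeartbeats 1000000

/-- **One-step inequality for SARAH on smooth convex problems** (Statement 7, Lemma 2 of
the paper). If each `f_i` is `L`-smooth and convex, `w*` minimizes `F`, and
`0 < η ≤ 1/L`, then for every `t ≥ 0` (within any single outer loop of SARAH, whose
starting point `w_0^{(s)} = x0` is arbitrary),
`E[F(w_{t+1}) - F(w*)] ≤ E[F(w_t) - F(w*)] - (η/2)E[‖∇F(w_t)‖²]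
  + (η/2)(Lη E[‖v_0‖²] - E[‖v_t‖²])`. -/
theorem sarah_convex_one_step
    (d n : ℕ) (hn : 0 < n)
    (f : Fin n → Vec d → ℝ) (F : Vec d → ℝ)
    (hF : ∀ w, F w = (∑ i, f i w) / n)
    (hdiff : ∀ i, Differentiable ℝ (f i))
    (L : ℝ) (hL : 0 < L)
    (hsmooth : ∀ i, ∀ w w' : Vec d, ‖gradient (f i) w - gradient (f i) w'‖ ≤ L * ‖w - w'‖)
    (hconv : ∀ i, ConvexOn ℝ Set.univ (f i))
    (wstar : Vec d) (hmin : ∀ w, F wstar ≤ F w)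
    (η : ℝ) (hη0 : 0 < η) (hη : η ≤ 1 / L)
    (x0 : Vec d) :
    ∀ t : ℕ,
      loopE n t hn (fun ι => F (innerSeq d n f F η x0 ι (t + 1)).1 - F wstar)
        ≤ loopE n t hn (fun ι => F (innerSeq d n f F η x0 ι t).1 - F wstar)
          - η / 2 * loopE n t hn (fun ι => ‖gradient F (innerSeq d n f F η x0 ι t).1‖ ^ 2)
          + η / 2 * (L * η * loopE n t hn (fun ι => ‖(innerSeq d n f F η x0 ι 0).2‖ ^ 2)
              - loopE n t hn (fun ι => ‖(innerSeq d n f F η x0 ι t).2‖ ^ 2)) := by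
  intro t
  simp only [loopE_eq_loopE']
  set IS := innerSeq d n f F η x0 with hIS
  have hnR : (0:ℝ) < n := by exact_mod_cast hn
  -- gradient facts for F
  have hgradF : ∀ w : Vec d, HasGradientAt F ((n:ℝ)⁻¹ • ∑ i, gradient (f i) w) w := by
    intro w
    have hFe : F = fun w => (n:ℝ)⁻¹ * ∑ i, f i w := by
      funext w'; rw [hF w', div_eq_inv_mul]
    have h1 : HasFDerivAt (fun w => ∑ i, f i w)
        (∑ i, InnerProductSpace.toDual ℝ (Vec d) (gradient (f i) w)) w :=
      HasFDerivAt.fun_sum fun i _ => ((hdiff i w).hasGradientAt).hasFDerivAt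
    have h2 := h1.const_mul ((n:ℝ)⁻¹)
    rw [hasGradientAt_iff_hasFDerivAt, map_smul, map_sum, hFe]
    exact h2
  have hFdiff : Differentiable ℝ F := fun w => (hgradF w).differentiableAt
  have hgradF' : ∀ w, gradient F w = (n:ℝ)⁻¹ • ∑ i, gradient (f i) w :=
    fun w => (hgradF w).gradient
  have hFsum : ∀ w, ∑ i, gradient (f i) w = (n:ℝ) • gradient F w := by
    intro w; rw [hgradF' w, smul_inv_smul₀ (ne_of_gt hnR)]
  have hFsmooth : ∀ w w' : Vec d, ‖gradient F w - gradient F w'‖ ≤ L * ‖w - w'‖ := by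
    intro w w'
    rw [hgradF' w, hgradF' w', ← smul_sub, ← Finset.sum_sub_distrib, norm_smul]
    have hb : ‖∑ i, (gradient (f i) w - gradient (f i) w')‖ ≤ ∑ _i : Fin n, L * ‖w - w'‖ :=
      (norm_sum_le _ _).trans (Finset.sum_le_sum fun i _ => hsmooth i w w')
    rw [Finset.sum_const] at hb
    simp only [Finset.card_univ, Fintype.card_fin, nsmul_eq_mul] at hb
    calc ‖(n:ℝ)⁻¹‖ * ‖∑ i, (gradient (f i) w - gradient (f i) w')‖
        ≤ ‖(n:ℝ)⁻¹‖ * ((n:ℝ) * (L * ‖w - w'‖)) :=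
          mul_le_mul_of_nonneg_left hb (norm_nonneg _)
      _ = L * ‖w - w'‖ := by
          rw [Real.norm_eq_abs, abs_of_pos (by positivity : (0:ℝ) < (n:ℝ)⁻¹)]
          field_simp
  have hLη : L * η ≤ 1 := by
    have h := mul_le_mul_of_nonneg_left hη hL.le
    rwa [mul_one_div, div_self hL.ne'] at h
  -- dependence on initial coordinates
  have hdep : ∀ (k : ℕ) (g g' : ℕ → Fin n), (∀ s, s < k → g s = g' s) → IS g k = IS g' k := by
    intro k
    induction k with
    | zero => intro g g' _; rfl
    | succ k ih =>
      intro g g' hgg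
      have hp : IS g k = IS g' k := ih g g' fun s hs => hgg s (Nat.lt_succ_of_lt hs)
      show innerSeq d n f F η x0 g (k+1) = innerSeq d n f F η x0 g' (k+1)
      simp only [innerSeq]
      rw [hIS] at hp
      rw [hp, hgg k (Nat.lt_succ_self k)]
  have hup : ∀ (k : ℕ) (g : ℕ → Fin n) (j : Fin n),
      IS (Function.update g k j) k = IS g k :=
    fun k g j => hdep k _ _ fun s hs => by
      rw [Function.update_of_ne (by omega : s ≠ k)]
  -- pointwise step bound via cocoercivity
  have hstep : ∀ (g : ℕ → Fin n) (k : ℕ),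
      ‖(IS g (k+1)).2 - (IS g k).2‖ ^ 2
        ≤ L * η * (‖(IS g k).2‖ ^ 2 - ‖(IS g (k+1)).2‖ ^ 2) := by
    intro g k
    set w := (IS g k).1 with hw
    set v := (IS g k).2 with hv
    have hS : IS g (k+1)
        = (w - η • v, gradient (f (g k)) (w - η • v) - gradient (f (g k)) w + v) := rfl
    rw [hS]
    set D := gradient (f (g k)) (w - η • v) - gradient (f (g k)) w with hD
    have hco := cocoercive (f (g k)) (hdiff (g k)) L hL (hsmooth (g k)) (hconv (g k))
      (w - η • v) w
    rw [show (w - η • v) - w = -(η • v) from by abel, inner_neg_right,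
      real_inner_smul_right] at hco
    have hco2 : ‖D‖ ^ 2 ≤ L * (-(η * ⟪D, v⟫)) := by
      have h3 := mul_le_mul_of_nonneg_left hco hL.le
      rwa [show L * (1 / L * ‖D‖ ^ 2) = ‖D‖ ^ 2 from by field_simp] at h3
    have hexp : ‖D + v‖ ^ 2 = ‖D‖ ^ 2 + 2 * ⟪D, v⟫ + ‖v‖ ^ 2 := norm_add_sq_real D v
    rw [show D + v - v = D from by abel]
    nlinarith [hco2, hexp, mul_le_mul_of_nonneg_right hLη (sq_nonneg ‖D‖), sq_nonneg ‖D‖]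
  -- martingale step
  have hmart : ∀ k : ℕ,
      loopE' n (k+1) hn (fun g => ‖(IS g (k+1)).2 - gradient F (IS g (k+1)).1‖ ^ 2)
        ≤ loopE' n k hn (fun g => ‖(IS g k).2 - gradient F (IS g k).1‖ ^ 2)
          + loopE' n (k+1) hn (fun g => ‖(IS g (k+1)).2 - (IS g k).2‖ ^ 2) := by
    intro k
    rw [loopE'_succ hn k (fun g => ‖(IS g (k+1)).2 - gradient F (IS g (k+1)).1‖ ^ 2),
      loopE'_succ hn k (fun g => ‖(IS g (k+1)).2 - (IS g k).2‖ ^ 2),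
      ← loopE'_add hn k]
    apply loopE'_mono hn k
    intro g
    set w := (IS g k).1 with hw
    set v := (IS g k).2 with hv
    have hSu : ∀ j : Fin n, IS (Function.update g k j) (k+1)
        = (w - η • v, gradient (f j) (w - η • v) - gradient (f j) w + v) := by
      intro j
      have e : IS (Function.update g k j) (k + 1)
          = ((IS (Function.update g k j) k).1 - η • (IS (Function.update g k j) k).2,
             gradient (f (Function.update g k j k))
                ((IS (Function.update g k j) k).1 - η • (IS (Function.update g k j) k).2)
              - gradient (f (Function.update g k j k)) (IS (Function.update g k j) k).1
              + (IS (Function.update g k j) k).2) := rfl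
      rw [e, hup k g j, Function.update_self]
    have e1 : ∀ j : Fin n,
        ‖(IS (Function.update g k j) (k+1)).2
            - gradient F (IS (Function.update g k j) (k+1)).1‖ ^ 2
        = ‖(v - gradient F w) + ((gradient (f j) (w - η • v) - gradient (f j) w)
            - (gradient F (w - η • v) - gradient F w))‖ ^ 2 := by
      intro j
      rw [hSu j]
      have : (gradient (f j) (w - η • v) - gradient (f j) w + v) - gradient F (w - η • v)
          = (v - gradient F w) + ((gradient (f j) (w - η • v) - gradient (f j) w)
            - (gradient F (w - η • v) - gradient F w)) := by abel
      rw [this]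
    have e2 : ∀ j : Fin n,
        ‖(IS (Function.update g k j) (k+1)).2 - (IS (Function.update g k j) k).2‖ ^ 2
        = ‖gradient (f j) (w - η • v) - gradient (f j) w‖ ^ 2 := by
      intro j
      rw [hSu j, hup k g j, ← hv]
      have : (gradient (f j) (w - η • v) - gradient (f j) w + v) - v
          = gradient (f j) (w - η • v) - gradient (f j) w := by abel
      rw [this]
    rw [Finset.sum_congr rfl fun j _ => e1 j, Finset.sum_congr rfl fun j _ => e2 j]
    exact avg_var_le hn (v - gradient F w) (gradient F (w - η • v) - gradient F w)
      (fun j => gradient (f j) (w - η • v) - gradient (f j) w)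
      (by rw [Finset.sum_sub_distrib, hFsum, hFsum, ← smul_sub])
  -- variance bound by induction
  have hVB : ∀ k : ℕ,
      loopE' n k hn (fun g => ‖(IS g k).2 - gradient F (IS g k).1‖ ^ 2)
        ≤ L * η * (‖gradient F x0‖ ^ 2 - loopE' n k hn (fun g => ‖(IS g k).2‖ ^ 2)) := by
    intro k
    induction k with
    | zero =>
      have h0 : (fun g : ℕ → Fin n => ‖(IS g 0).2 - gradient F (IS g 0).1‖ ^ 2)
          = fun _ => (0:ℝ) := by
        funext g
        show ‖gradient F x0 - gradient F x0‖ ^ 2 = 0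
        simp
      have h1 : (fun g : ℕ → Fin n => ‖(IS g 0).2‖ ^ 2)
          = fun _ => ‖gradient F x0‖ ^ 2 := rfl
      rw [h0, h1, loopE'_const, loopE'_const]
      simp
    | succ k ih =>
      have h1 := hmart k
      have h2 : loopE' n (k+1) hn (fun g => ‖(IS g (k+1)).2 - (IS g k).2‖ ^ 2)
          ≤ L * η * (loopE' n (k+1) hn (fun g => ‖(IS g k).2‖ ^ 2)
              - loopE' n (k+1) hn (fun g => ‖(IS g (k+1)).2‖ ^ 2)) := by
        rw [← loopE'_sub hn (k+1), ← loopE'_mul hn (L * η) (k+1)]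
        exact loopE'_mono hn (k+1) fun g => hstep g k
      have h3 : loopE' n (k+1) hn (fun g => ‖(IS g k).2‖ ^ 2)
          = loopE' n k hn (fun g => ‖(IS g k).2‖ ^ 2) := by
        apply loopE'_succ_dep hn k
        intro g j
        show ‖(IS (Function.update g k j) k).2‖ ^ 2 = ‖(IS g k).2‖ ^ 2
        rw [hup k g j]
      rw [h3] at h2
      linarith [h1, h2, ih]
  -- pointwise descent inequality
  have hptw : ∀ g : ℕ → Fin n,
      F (IS g (t+1)).1 - F wstar
        ≤ (F (IS g t).1 - F wstar)
          + (-(η/2) * ‖gradient F (IS g t).1‖ ^ 2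
            + ((L * η ^ 2 / 2 - η / 2) * ‖(IS g t).2‖ ^ 2
              + η / 2 * ‖(IS g t).2 - gradient F (IS g t).1‖ ^ 2)) := by
    intro g
    set w := (IS g t).1 with hw
    set v := (IS g t).2 with hv
    have hW1 : (IS g (t+1)).1 = w - η • v := rfl
    have hdes := descent_lemma F hFdiff L hL.le hFsmooth w (w - η • v)
    have h1 : ⟪gradient F w, (w - η • v) - w⟫ = -(η * ⟪gradient F w, v⟫) := by
      rw [show (w - η • v) - w = -(η • v) from by abel, inner_neg_right,
        real_inner_smul_right]
    have h2 : ‖(w - η • v) - w‖ ^ 2 = η ^ 2 * ‖v‖ ^ 2 := by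
      rw [show (w - η • v) - w = -(η • v) from by abel, norm_neg, norm_smul,
        Real.norm_eq_abs, mul_pow, sq_abs]
    have h3 : 2 * ⟪gradient F w, v⟫
        = ‖gradient F w‖ ^ 2 + ‖v‖ ^ 2 - ‖v - gradient F w‖ ^ 2 := by
      have h4 := norm_sub_sq_real v (gradient F w)
      have h5 : ⟪v, gradient F w⟫ = ⟪gradient F w, v⟫ := real_inner_comm _ _
      linarith
    rw [hW1]
    rw [h1, h2] at hdes
    have heq : -(η * ⟪gradient F w, v⟫) + L / 2 * (η ^ 2 * ‖v‖ ^ 2)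
        = -(η/2) * ‖gradient F w‖ ^ 2
          + ((L * η ^ 2 / 2 - η / 2) * ‖v‖ ^ 2 + η / 2 * ‖v - gradient F w‖ ^ 2) := by
      linear_combination (-(η/2)) * h3
    linarith [hdes, heq]
  -- assemble
  have hmain := loopE'_mono hn t hptw
  rw [loopE'_add hn t, loopE'_add hn t, loopE'_add hn t, loopE'_mul hn, loopE'_mul hn,
    loopE'_mul hn] at hmain
  have hE0 : loopE' n t hn (fun g => ‖(IS g 0).2‖ ^ 2) = ‖gradient F x0‖ ^ 2 := by
    have he : (fun g : ℕ → Fin n => ‖(IS g 0).2‖ ^ 2)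
        = fun _ => ‖gradient F x0‖ ^ 2 := rfl
    rw [he, loopE'_const]
  rw [hE0]
  have hVBt := hVB t
  have hVBt' := mul_le_mul_of_nonneg_left hVBt (by positivity : (0:ℝ) ≤ η/2)
  nlinarith [hmain, hVBt']

end
end

section
/- Suppose F = (1/n) Σ_{i=1}^n f_i is average-L-smooth. Consider a single outer-loop iteration of SARAH with learning rate η > 0. Then for every t with 1 ≤ t ≤ m and any outer iteration s ≥ 1, E[‖∇F(w_t^{(s)}) − v_t^{(s)}‖²] ≤ L²η² Σ_{j=1}^{t} E[‖v_{j−1}^{(s)}‖²]. -/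
noncomputable section

/-! ### Auxiliary machinery -/

/-- Padding of a finite index tuple by a dummy index. -/
def sarahPad (n k : ℕ) (hn : 0 < n) (ι : Fin k → Fin n) : ℕ → Fin n :=
  fun t => if h : t < k then ι ⟨t, h⟩ else ⟨0, hn⟩

lemma sarahLoopE_eq (n k : ℕ) (hn : 0 < n) (X : (ℕ → Fin n) → ℝ) :
    loopE n k hn X = (∑ ι : Fin k → Fin n, X (sarahPad n k hn ι)) / ((n : ℝ) ^ k) := by
  unfold loopE sarahPad
  congr 1
  rw [Fintype.card_fun]
  simp

lemma sarahPad_snoc {n k : ℕ} (hn : 0 < n) (σ : Fin k → Fin n) (i : Fin n) :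
    sarahPad n (k+1) hn (Fin.snoc σ i) = Function.update (sarahPad n k hn σ) k i := by
  funext j
  rcases lt_trichotomy j k with hj | hj | hj
  · have h1 : j < k + 1 := by omega
    rw [Function.update_of_ne (by omega : j ≠ k)]
    simp only [sarahPad, dif_pos h1, dif_pos hj]
    rw [show (⟨j, h1⟩ : Fin (k+1)) = Fin.castSucc ⟨j, hj⟩ from rfl, Fin.snoc_castSucc]
  · subst hj
    have h1 : j < j + 1 := by omega
    simp only [sarahPad, dif_pos h1, Function.update_self]
    rw [show (⟨j, h1⟩ : Fin (j+1)) = Fin.last j from rfl, Fin.snoc_last]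
  · have h1 : ¬ j < k + 1 := by omega
    have h2 : ¬ j < k := by omega
    rw [Function.update_of_ne (by omega : j ≠ k)]
    simp only [sarahPad, dif_neg h1, dif_neg h2]

lemma sarahSum_split {n : ℕ} (hn : 0 < n) (k : ℕ) (g : (ℕ → Fin n) → ℝ) :
    ∑ ι : Fin (k+1) → Fin n, g (sarahPad n (k+1) hn ι)
      = ∑ σ : Fin k → Fin n, ∑ i : Fin n, g (Function.update (sarahPad n k hn σ) k i) := by
  rw [← Equiv.sum_comp (Fin.snocEquiv fun _ => Fin n)
    (fun ι => g (sarahPad n (k+1) hn ι)), Fintype.sum_prod_type, Finset.sum_comm]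
  refine Finset.sum_congr rfl fun σ _ => Finset.sum_congr rfl fun i _ => ?_
  have h : (Fin.snocEquiv (fun _ => Fin n)) (i, σ) = Fin.snoc σ i := rfl
  simp only [h, sarahPad_snoc]

lemma sarahKey_ineq {d n : ℕ} (hn : 0 < n) (D : Vec d) (a : Fin n → Vec d) :
    ∑ i, ‖D + (n:ℝ)⁻¹ • (∑ j, a j) - a i‖ ^ 2 ≤ n * ‖D‖ ^ 2 + ∑ i, ‖a i‖ ^ 2 := by
  set ab : Vec d := (n:ℝ)⁻¹ • (∑ j, a j) with hab
  have hsum : (∑ j, a j) = (n:ℝ) • ab := by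
    rw [hab, smul_smul, mul_inv_cancel₀ (by positivity : (n:ℝ) ≠ 0), one_smul]
  have expand : ∀ i : Fin n, ‖D + ab - a i‖ ^ 2
      = ‖D + ab‖ ^ 2 - 2 * inner ℝ (D + ab) (a i) + ‖a i‖ ^ 2 := fun i => by
    rw [norm_sub_sq_real]
  rw [Finset.sum_congr rfl fun i _ => expand i]
  rw [Finset.sum_add_distrib, Finset.sum_sub_distrib, Finset.sum_const, ← Finset.mul_sum,
    ← inner_sum, hsum, real_inner_smul_right]
  have h1 : inner ℝ (D + ab) ab = inner ℝ D ab + ‖ab‖ ^ 2 := by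
    rw [inner_add_left, real_inner_self_eq_norm_sq]
  have h2 : ‖D + ab‖ ^ 2 = ‖D‖ ^ 2 + 2 * inner ℝ D ab + ‖ab‖ ^ 2 := norm_add_sq_real D ab
  have hab2 : (0:ℝ) ≤ ‖ab‖ ^ 2 := by positivity
  simp only [Finset.card_univ, Fintype.card_fin, nsmul_eq_mul]
  nlinarith [hab2]

lemma sarahGradF {d n : ℕ} (hn : 0 < n) (f : Fin n → Vec d → ℝ) (F : Vec d → ℝ)
    (hF : ∀ w, F w = (∑ i, f i w) / n) (hdiff : ∀ i, Differentiable ℝ (f i)) (w : Vec d) :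
    gradient F w = (n:ℝ)⁻¹ • ∑ i, gradient (f i) w := by
  have hFe : F = fun x => (n:ℝ)⁻¹ * ∑ i, f i x := by
    funext x; rw [hF, div_eq_inv_mul]
  have hfd : HasFDerivAt (fun x => (n:ℝ)⁻¹ * ∑ i, f i x)
      ((n:ℝ)⁻¹ • ∑ i, fderiv ℝ (f i) w) w :=
    (HasFDerivAt.fun_sum fun i _ => (hdiff i w).hasFDerivAt).const_mul _
  have hf : fderiv ℝ F w = (n:ℝ)⁻¹ • ∑ i, fderiv ℝ (f i) w := by rw [hFe]; exact hfd.fderiv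
  show (InnerProductSpace.toDual ℝ (Vec d)).symm (fderiv ℝ F w) = _
  rw [hf, map_smul, map_sum]
  rfl

lemma sarahInnerSeq_congr (d n : ℕ) (f : Fin n → Vec d → ℝ) (F : Vec d → ℝ) (η : ℝ)
    (x0 : Vec d) :
    ∀ (t : ℕ) (ι ι' : ℕ → Fin n), (∀ j, j < t → ι j = ι' j) →
      innerSeq d n f F η x0 ι t = innerSeq d n f F η x0 ι' t
  | 0, _, _, _ => rfl
  | t+1, ι, ι', h => by
    have ih := sarahInnerSeq_congr d n f F η x0 t ι ι'
      fun j hj => h j (Nat.lt_succ_of_lt hj)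
    simp only [innerSeq, ih, h t (Nat.lt_succ_self t)]

lemma sarahLoopE_succ {n : ℕ} (hn : 0 < n) (k : ℕ) (X : (ℕ → Fin n) → ℝ)
    (hX : ∀ ι ι' : ℕ → Fin n, (∀ j, j < k → ι j = ι' j) → X ι = X ι') :
    loopE n (k+1) hn X = loopE n k hn X := by
  rw [sarahLoopE_eq, sarahLoopE_eq, sarahSum_split hn k X]
  have hinner : ∀ σ : Fin k → Fin n,
      ∑ i : Fin n, X (Function.update (sarahPad n k hn σ) k i)
        = (n : ℝ) * X (sarahPad n k hn σ) := by
    intro σ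
    rw [Finset.sum_congr rfl fun i _ => hX _ _
      fun j hj => Function.update_of_ne (by omega : j ≠ k) _ _]
    simp [mul_comm]
  rw [Finset.sum_congr rfl fun σ _ => hinner σ, ← Finset.mul_sum]
  have hn' : (n:ℝ) ≠ 0 := by positivity
  rw [pow_succ]
  field_simp

lemma sarahStep_bound {d n : ℕ} (hn : 0 < n) (f : Fin n → Vec d → ℝ) (F : Vec d → ℝ)
    (hF : ∀ w, F w = (∑ i, f i w) / n) (hdiff : ∀ i, Differentiable ℝ (f i))
    (L η : ℝ)
    (havg : ∀ w w' : Vec d,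
      (∑ i, ‖gradient (f i) w - gradient (f i) w'‖ ^ 2) / n ≤ L ^ 2 * ‖w - w'‖ ^ 2)
    (x0 : Vec d) (ι : ℕ → Fin n) (k : ℕ) :
    ∑ i : Fin n, ‖gradient F (innerSeq d n f F η x0 (Function.update ι k i) (k+1)).1
        - (innerSeq d n f F η x0 (Function.update ι k i) (k+1)).2‖ ^ 2
      ≤ n * ‖gradient F (innerSeq d n f F η x0 ι k).1 - (innerSeq d n f F η x0 ι k).2‖ ^ 2
        + n * (L ^ 2 * η ^ 2 * ‖(innerSeq d n f F η x0 ι k).2‖ ^ 2) := by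
  set p := innerSeq d n f F η x0 ι k with hp
  set w : Vec d := p.1 with hw
  set v : Vec d := p.2 with hv
  set w' : Vec d := w - η • v with hw'
  set a : Fin n → Vec d := fun i => gradient (f i) w' - gradient (f i) w with ha
  have habar : gradient F w' - gradient F w = (n:ℝ)⁻¹ • ∑ i, a i := by
    rw [sarahGradF hn f F hF hdiff, sarahGradF hn f F hF hdiff, ← smul_sub,
      ← Finset.sum_sub_distrib]
  have hstep : ∀ i : Fin n,
      innerSeq d n f F η x0 (Function.update ι k i) (k+1)
        = (w', gradient (f i) w' - gradient (f i) w + v) := by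
    intro i
    have hsame : innerSeq d n f F η x0 (Function.update ι k i) k = p := by
      rw [hp]
      exact sarahInnerSeq_congr d n f F η x0 k _ _
        fun j hj => Function.update_of_ne (by omega : j ≠ k) _ _
    simp only [innerSeq, hsame, Function.update_self]
    rfl
  have hDi : ∀ i : Fin n,
      gradient F (innerSeq d n f F η x0 (Function.update ι k i) (k+1)).1
          - (innerSeq d n f F η x0 (Function.update ι k i) (k+1)).2
        = (gradient F w - v) + (n:ℝ)⁻¹ • (∑ j, a j) - a i := by
    intro i
    rw [hstep i, ← habar, ha]
    simp only
    abel
  have hvar : ∑ i, ‖a i‖ ^ 2 ≤ n * (L ^ 2 * η ^ 2 * ‖v‖ ^ 2) := by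
    have h1 := havg w' w
    rw [div_le_iff₀ (by positivity : (0:ℝ) < n)] at h1
    have h2 : ‖w' - w‖ ^ 2 = η ^ 2 * ‖v‖ ^ 2 := by
      rw [hw', sub_sub_cancel_left, norm_neg, norm_smul]
      simp [mul_pow, sq_abs]
    rw [h2] at h1
    calc ∑ i, ‖a i‖ ^ 2 ≤ L ^ 2 * (η ^ 2 * ‖v‖ ^ 2) * n := h1
      _ = n * (L ^ 2 * η ^ 2 * ‖v‖ ^ 2) := by ring
  calc ∑ i : Fin n, ‖gradient F (innerSeq d n f F η x0 (Function.update ι k i) (k+1)).1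
        - (innerSeq d n f F η x0 (Function.update ι k i) (k+1)).2‖ ^ 2
      = ∑ i : Fin n, ‖(gradient F w - v) + (n:ℝ)⁻¹ • (∑ j, a j) - a i‖ ^ 2 :=
        Finset.sum_congr rfl fun i _ => by rw [hDi i]
    _ ≤ n * ‖gradient F w - v‖ ^ 2 + ∑ i, ‖a i‖ ^ 2 := sarahKey_ineq hn _ a
    _ ≤ n * ‖gradient F w - v‖ ^ 2 + n * (L ^ 2 * η ^ 2 * ‖v‖ ^ 2) := by linarith

lemma sarahMain (d n : ℕ) (hn : 0 < n)
    (f : Fin n → Vec d → ℝ) (F : Vec d → ℝ)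
    (hF : ∀ w, F w = (∑ i, f i w) / n)
    (hdiff : ∀ i, Differentiable ℝ (f i))
    (L η : ℝ)
    (havg : ∀ w w' : Vec d,
      (∑ i, ‖gradient (f i) w - gradient (f i) w'‖ ^ 2) / n ≤ L ^ 2 * ‖w - w'‖ ^ 2)
    (x0 : Vec d) :
    ∀ k : ℕ,
      loopE n k hn (fun ι =>
          ‖gradient F (innerSeq d n f F η x0 ι k).1 - (innerSeq d n f F η x0 ι k).2‖ ^ 2)
        ≤ L ^ 2 * η ^ 2 * ∑ j ∈ Finset.range k,
            loopE n k hn (fun ι => ‖(innerSeq d n f F η x0 ι j).2‖ ^ 2) := by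
  intro k
  induction k with
  | zero => simp [loopE, innerSeq]
  | succ k ih =>
    have hnR : (0:ℝ) < (n:ℝ) ^ k := by positivity
    have hn0 : (n:ℝ) ≠ 0 := by positivity
    -- step 1: bound level-(k+1) expectation by level-k quantities
    have h1 : loopE n (k+1) hn (fun ι =>
          ‖gradient F (innerSeq d n f F η x0 ι (k+1)).1
            - (innerSeq d n f F η x0 ι (k+1)).2‖ ^ 2)
        ≤ loopE n k hn (fun ι =>
            ‖gradient F (innerSeq d n f F η x0 ι k).1 - (innerSeq d n f F η x0 ι k).2‖ ^ 2)
          + L ^ 2 * η ^ 2 *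
            loopE n k hn (fun ι => ‖(innerSeq d n f F η x0 ι k).2‖ ^ 2) := by
      rw [sarahLoopE_eq, sarahLoopE_eq, sarahLoopE_eq,
        sarahSum_split hn k (fun ι =>
          ‖gradient F (innerSeq d n f F η x0 ι (k+1)).1
            - (innerSeq d n f F η x0 ι (k+1)).2‖ ^ 2)]
      have hb : ∑ σ : Fin k → Fin n, ∑ i : Fin n,
            ‖gradient F (innerSeq d n f F η x0
                (Function.update (sarahPad n k hn σ) k i) (k+1)).1
              - (innerSeq d n f F η x0
                (Function.update (sarahPad n k hn σ) k i) (k+1)).2‖ ^ 2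
          ≤ ∑ σ : Fin k → Fin n,
              (n * ‖gradient F (innerSeq d n f F η x0 (sarahPad n k hn σ) k).1
                  - (innerSeq d n f F η x0 (sarahPad n k hn σ) k).2‖ ^ 2
                + n * (L ^ 2 * η ^ 2
                  * ‖(innerSeq d n f F η x0 (sarahPad n k hn σ) k).2‖ ^ 2)) :=
        Finset.sum_le_sum fun σ _ =>
          sarahStep_bound hn f F hF hdiff L η havg x0 (sarahPad n k hn σ) k
      calc (∑ σ : Fin k → Fin n, ∑ i : Fin n,
            ‖gradient F (innerSeq d n f F η x0
                (Function.update (sarahPad n k hn σ) k i) (k+1)).1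
              - (innerSeq d n f F η x0
                (Function.update (sarahPad n k hn σ) k i) (k+1)).2‖ ^ 2) / (n:ℝ) ^ (k+1)
          ≤ (∑ σ : Fin k → Fin n,
              (n * ‖gradient F (innerSeq d n f F η x0 (sarahPad n k hn σ) k).1
                  - (innerSeq d n f F η x0 (sarahPad n k hn σ) k).2‖ ^ 2
                + n * (L ^ 2 * η ^ 2
                  * ‖(innerSeq d n f F η x0 (sarahPad n k hn σ) k).2‖ ^ 2))) / (n:ℝ) ^ (k+1) := by
            gcongr
        _ = (∑ σ : Fin k → Fin n,
              ‖gradient F (innerSeq d n f F η x0 (sarahPad n k hn σ) k).1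
                - (innerSeq d n f F η x0 (sarahPad n k hn σ) k).2‖ ^ 2) / (n:ℝ) ^ k
            + L ^ 2 * η ^ 2 *
              ((∑ σ : Fin k → Fin n,
                ‖(innerSeq d n f F η x0 (sarahPad n k hn σ) k).2‖ ^ 2) / (n:ℝ) ^ k) := by
            rw [Finset.sum_add_distrib]
            simp only [← Finset.mul_sum]
            field_simp [pow_succ]
            ring
    -- step 2: rewrite RHS expectations from level k+1 to level k
    have hconv : ∀ j, j ≤ k →
        loopE n (k+1) hn (fun ι => ‖(innerSeq d n f F η x0 ι j).2‖ ^ 2)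
          = loopE n k hn (fun ι => ‖(innerSeq d n f F η x0 ι j).2‖ ^ 2) := by
      intro j hj
      refine sarahLoopE_succ hn k _ fun ι ι' hagree => ?_
      rw [sarahInnerSeq_congr d n f F η x0 j ι ι' fun j' hj' => hagree j' (by omega)]
    have hsum : ∑ j ∈ Finset.range (k+1),
          loopE n (k+1) hn (fun ι => ‖(innerSeq d n f F η x0 ι j).2‖ ^ 2)
        = ∑ j ∈ Finset.range (k+1),
            loopE n k hn (fun ι => ‖(innerSeq d n f F η x0 ι j).2‖ ^ 2) :=
      Finset.sum_congr rfl fun j hj => hconv j (by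
        have := Finset.mem_range.mp hj; omega)
    rw [hsum, Finset.sum_range_succ, mul_add]
    linarith

/-- **Variance bound for the SARAH estimator** (Statement 17).
Under average-`L`-smoothness, within a single outer loop of SARAH (with arbitrary
starting point `x0` and inner loop size `m`), for every `1 ≤ t ≤ m`,
`E[‖∇F(w_t) - v_t‖²] ≤ L²η² Σ_{j=1}^t E[‖v_{j-1}‖²]`. -/
theorem sarah_variance_bound
    (d n m : ℕ) (hn : 0 < n)
    (f : Fin n → Vec d → ℝ) (F : Vec d → ℝ)
    (hF : ∀ w, F w = (∑ i, f i w) / n)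
    (hdiff : ∀ i, Differentiable ℝ (f i))
    (L η : ℝ) (hL : 0 < L) (hη0 : 0 < η)
    (havg : ∀ w w' : Vec d,
      (∑ i, ‖gradient (f i) w - gradient (f i) w'‖ ^ 2) / n ≤ L ^ 2 * ‖w - w'‖ ^ 2)
    (x0 : Vec d) :
    ∀ t : ℕ, 1 ≤ t → t ≤ m →
      loopE n t hn (fun ι =>
          ‖gradient F (innerSeq d n f F η x0 ι t).1 - (innerSeq d n f F η x0 ι t).2‖ ^ 2)
        ≤ L ^ 2 * η ^ 2 * ∑ j ∈ Finset.range t,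
            loopE n t hn (fun ι => ‖(innerSeq d n f F η x0 ι j).2‖ ^ 2) := by
  intro t _ _
  exact sarahMain d n hn f F hF hdiff L η havg x0 t

end
end
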